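/- Let G be a group and Λ ⊆ G^ℤ a shift-invariant subgroup. For k, n ≥ 1, the quotient group 𝔅_n(Λ)/P_n(Λ,1^k) of n-blocks modulo the predecessor subgroup is isomorphic, as a group, to the quotient 𝔅_k(Λ)/F_k(Λ,1^n); an isomorphism sends the coset F_k(Λ,a) to P_n(Λ,b) for any b ∈ F_k(Λ,a). In particular the set of distinct follower sets {F_k(Λ,a) : a ∈ 𝔅_n(Λ)} and the set of distinct predecessor sets {P_n(Λ,b) : b ∈ 𝔅_k(Λ)} have the same cardinality. -/

import Mathlib

open Pointwise

/-- Let `Λ ⊆ G^ℤ` be a shift-invariant subgroup. The family of follower sets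
`{F_k(Λ,a) : a ∈ 𝔅_n(Λ)}` (the cosets of `F_k(Λ,1^n)`) and the family of
predecessor sets `{P_n(Λ,b) : b ∈ 𝔅_k(Λ)}` (the cosets of `P_n(Λ,1^k)`) are
isomorphic as groups: there is a bijection `τ` between the two families which
sends `F_k(Λ,a)` to `P_n(Λ,b)` for any `b ∈ F_k(Λ,a)`, and which is
multiplicative for the pointwise product of sets. -/
theorem stmt16 {G : Type*} [Group G] (Λ : Subgroup (ℤ → G))
    (hshift : ∀ x : ℤ → G, x ∈ Λ ↔ (fun i => x (i + 1)) ∈ Λ)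
    (k n : ℕ) (hk : 1 ≤ k) (hn : 1 ≤ n) :
    let Bn : Set (Fin n → G) := {a | ∃ x ∈ Λ, ∀ i : Fin n, x ((i.1 : ℤ) + 1) = a i}
    let Bk : Set (Fin k → G) := {b | ∃ x ∈ Λ, ∀ i : Fin k, x ((i.1 : ℤ) + 1) = b i}
    let F : (Fin n → G) → Set (Fin k → G) := fun a => {b | ∃ x ∈ Λ,
      (∀ i : Fin n, x ((i.1 : ℤ) + 1) = a i) ∧
      (∀ i : Fin k, x ((n : ℤ) + (i.1 : ℤ) + 1) = b i)}
    let P : (Fin k → G) → Set (Fin n → G) := fun b => {a | ∃ x ∈ Λ,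
      (∀ i : Fin n, x ((i.1 : ℤ) + 1) = a i) ∧
      (∀ i : Fin k, x ((n : ℤ) + (i.1 : ℤ) + 1) = b i)}
    let famF : Set (Set (Fin k → G)) := {s | ∃ a ∈ Bn, s = F a}
    let famP : Set (Set (Fin n → G)) := {s | ∃ b ∈ Bk, s = P b}
    ∃ τ : Set (Fin k → G) → Set (Fin n → G),
      Set.BijOn τ famF famP ∧
      (∀ a ∈ Bn, ∀ b ∈ F a, τ (F a) = P b) ∧
      (∀ a ∈ Bn, ∀ a' ∈ Bn, τ (F a * F a') = τ (F a) * τ (F a')) := by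
  intro Bn Bk F P famF famP
  -- shift by any integer
  have hsh : ∀ m : ℤ, ∀ x ∈ Λ, (fun i => x (i + m)) ∈ Λ := by
    intro m
    induction m using Int.induction_on with
    | zero => intro x hx; simpa using hx
    | succ j ih =>
        intro x hx
        have h2 := (hshift (fun i => x (i + (j : ℤ)))).mp (ih x hx)
        have he : (fun i : ℤ => x (i + 1 + (j : ℤ))) = (fun i : ℤ => x (i + ((j : ℤ) + 1))) := by
          funext i; congr 1; ring
        simpa [he] using h2
    | pred j ih =>
        intro x hx
        apply (hshift (fun i => x (i + (-(j : ℤ) - 1)))).mpr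
        have he : (fun i : ℤ => x (i + 1 + (-(j : ℤ) - 1))) = (fun i : ℤ => x (i + (-(j : ℤ)))) := by
          funext i; congr 1; ring
        simpa [he] using ih x hx
  -- every n-block has a follower
  have hFne : ∀ a ∈ Bn, ∃ b, b ∈ F a := by
    rintro a ⟨x, hx, hxa⟩
    exact ⟨fun i => x ((n : ℤ) + (i.1 : ℤ) + 1), x, hx, hxa, fun i => rfl⟩
  -- followers are k-blocks
  have hFBk : ∀ a, ∀ b ∈ F a, b ∈ Bk := by
    rintro a b ⟨x, hx, _, hxb⟩
    refine ⟨fun i => x (i + (n : ℤ)), hsh n x hx, ?_⟩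
    intro i
    show x ((i.1 : ℤ) + 1 + (n : ℤ)) = b i
    rw [show ((i.1 : ℤ) + 1 + (n : ℤ)) = (n : ℤ) + (i.1 : ℤ) + 1 by ring]
    exact hxb i
  -- P depends only on the follower class
  have hPsub : ∀ a b b', b ∈ F a → b' ∈ F a → P b ⊆ P b' := by
    rintro a b b' ⟨y, hy, hya, hyb⟩ ⟨z, hz, hza, hzb⟩ a' ⟨x, hx, hxa, hxb⟩
    refine ⟨x * y⁻¹ * z, mul_mem (mul_mem hx (inv_mem hy)) hz, ?_, ?_⟩
    · intro i
      simp only [Pi.mul_apply, Pi.inv_apply, hxa i, hya i, hza i]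
      group
    · intro i
      simp only [Pi.mul_apply, Pi.inv_apply, hxb i, hyb i, hzb i]
      group
  have hPeq : ∀ a b b', b ∈ F a → b' ∈ F a → P b = P b' := fun a b b' h h' =>
    le_antisymm (hPsub a b b' h h') (hPsub a b' b h' h)
  -- F depends only on the predecessor class
  have hFsub : ∀ b a a', b ∈ F a → b ∈ F a' → F a ⊆ F a' := by
    rintro b a a' ⟨y, hy, hya, hyb⟩ ⟨z, hz, hza, hzb⟩ c ⟨x, hx, hxa, hxc⟩
    refine ⟨z * y⁻¹ * x, mul_mem (mul_mem hz (inv_mem hy)) hx, ?_, ?_⟩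
    · intro i
      simp only [Pi.mul_apply, Pi.inv_apply, hxa i, hya i, hza i]
      group
    · intro i
      simp only [Pi.mul_apply, Pi.inv_apply, hxc i, hyb i, hzb i]
      group
  have hFeq : ∀ b a a', b ∈ F a → b ∈ F a' → F a = F a' := fun b a a' h h' =>
    le_antisymm (hFsub b a a' h h') (hFsub b a' a h' h)
  -- multiplicativity of F
  have hFmul : ∀ a a' b, b ∈ F a → F a * F a' = F (a * a') := by
    rintro a a' b ⟨y, hy, hya, hyb⟩
    ext c
    constructor
    · rintro ⟨u, ⟨x1, hx1, hx1a, hx1u⟩, v, ⟨x2, hx2, hx2a, hx2v⟩, rfl⟩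
      refine ⟨x1 * x2, mul_mem hx1 hx2, ?_, ?_⟩
      · intro i; simp only [Pi.mul_apply, hx1a i, hx2a i]
      · intro i; simp only [Pi.mul_apply, hx1u i, hx2v i]
    · rintro ⟨x, hx, hxa, hxc⟩
      have hmem : b⁻¹ * c ∈ F a' := by
        refine ⟨y⁻¹ * x, mul_mem (inv_mem hy) hx, ?_, ?_⟩
        · intro i
          simp only [Pi.mul_apply, Pi.inv_apply, hxa i, hya i]
          group
        · intro i
          simp only [Pi.mul_apply, Pi.inv_apply, hxc i, hyb i]
      have hc : c = b * (b⁻¹ * c) := by group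
      rw [hc]
      exact Set.mul_mem_mul ⟨y, hy, hya, hyb⟩ hmem
  -- multiplicativity of P
  have hPmul : ∀ a b b', b ∈ F a → P b * P b' = P (b * b') := by
    rintro a b b' ⟨y, hy, hya, hyb⟩
    ext c
    constructor
    · rintro ⟨u, ⟨x1, hx1, hx1u, hx1b⟩, v, ⟨x2, hx2, hx2v, hx2b⟩, rfl⟩
      refine ⟨x1 * x2, mul_mem hx1 hx2, ?_, ?_⟩
      · intro i; simp only [Pi.mul_apply, hx1u i, hx2v i]
      · intro i; simp only [Pi.mul_apply, hx1b i, hx2b i]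
    · rintro ⟨x, hx, hxc, hxbb⟩
      have hmem : a⁻¹ * c ∈ P b' := by
        refine ⟨y⁻¹ * x, mul_mem (inv_mem hy) hx, ?_, ?_⟩
        · intro i
          simp only [Pi.mul_apply, Pi.inv_apply, hxc i, hya i]
        · intro i
          simp only [Pi.mul_apply, Pi.inv_apply, hxbb i, hyb i]
          group
      have hc : c = a * (a⁻¹ * c) := by group
      rw [hc]
      exact Set.mul_mem_mul ⟨y, hy, hya, hyb⟩ hmem
  -- the map sends F a to P b for b ∈ F a
  have hτ : ∀ a b, b ∈ F a → (⋃ b' ∈ F a, P b') = P b := by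
    intro a b hb
    ext a'
    simp only [Set.mem_iUnion]
    constructor
    · rintro ⟨b', hb', ha'⟩
      exact hPsub a b' b hb' hb ha'
    · intro h; exact ⟨b, hb, h⟩
  refine ⟨fun s => ⋃ b ∈ s, P b, ⟨?_, ?_, ?_⟩, ?_, ?_⟩
  · -- MapsTo
    rintro s ⟨a, ha, rfl⟩
    obtain ⟨b, hb⟩ := hFne a ha
    exact ⟨b, hFBk a b hb, (hτ a b hb).symm ▸ rfl⟩
  · -- InjOn
    rintro s ⟨a, ha, rfl⟩ s' ⟨a', ha', rfl⟩ heq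
    obtain ⟨b, hb⟩ := hFne a ha
    obtain ⟨b', hb'⟩ := hFne a' ha'
    have heq' : P b = P b' := by
      rw [← hτ a b hb, ← hτ a' b' hb']; exact heq
    -- a ∈ P b (same witness), hence a ∈ P b', i.e. b' ∈ F a
    have haPb : a ∈ P b := hb
    have haPb' : a ∈ P b' := heq' ▸ haPb
    have hb'Fa : b' ∈ F a := haPb'
    exact hFeq b' a a' hb'Fa hb'
  · -- SurjOn
    rintro t ⟨b, ⟨x, hx, hxb⟩, rfl⟩
    refine ⟨F (fun i => x ((i.1 : ℤ) + 1 - (n : ℤ))), ?_, ?_⟩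
    · have hy := hsh (-(n : ℤ)) x hx
      have hbF : b ∈ F (fun i => x ((i.1 : ℤ) + 1 - (n : ℤ))) := by
        refine ⟨fun i => x (i + (-(n : ℤ))), hy, ?_, ?_⟩
        · intro i
          show x ((i.1 : ℤ) + 1 + -(n : ℤ)) = x ((i.1 : ℤ) + 1 - (n : ℤ))
          congr 1
        · intro i
          show x ((n : ℤ) + (i.1 : ℤ) + 1 + -(n : ℤ)) = b i
          rw [show ((n : ℤ) + (i.1 : ℤ) + 1 + -(n : ℤ)) = (i.1 : ℤ) + 1 by ring]
          exact hxb i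
      refine ⟨fun i => x ((i.1 : ℤ) + 1 - (n : ℤ)), ?_, rfl⟩
      obtain ⟨z, hz, hza, _⟩ := hbF
      exact ⟨z, hz, hza⟩
    · have hy := hsh (-(n : ℤ)) x hx
      have hbF : b ∈ F (fun i => x ((i.1 : ℤ) + 1 - (n : ℤ))) := by
        refine ⟨fun i => x (i + (-(n : ℤ))), hy, ?_, ?_⟩
        · intro i
          show x ((i.1 : ℤ) + 1 + -(n : ℤ)) = x ((i.1 : ℤ) + 1 - (n : ℤ))
          congr 1
        · intro i
          show x ((n : ℤ) + (i.1 : ℤ) + 1 + -(n : ℤ)) = b i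
          rw [show ((n : ℤ) + (i.1 : ℤ) + 1 + -(n : ℤ)) = (i.1 : ℤ) + 1 by ring]
          exact hxb i
      exact hτ _ b hbF
  · -- sends F a to P b
    intro a _ b hb
    exact hτ a b hb
  · -- multiplicative
    intro a ha a' ha'
    obtain ⟨b, hb⟩ := hFne a ha
    obtain ⟨b', hb'⟩ := hFne a' ha'
    have hbb' : b * b' ∈ F (a * a') := by
      obtain ⟨x, hx, hxa, hxb⟩ := hb
      obtain ⟨y, hy, hya, hyb⟩ := hb'
      refine ⟨x * y, mul_mem hx hy, ?_, ?_⟩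
      · intro i; simp only [Pi.mul_apply, hxa i, hya i]
      · intro i; simp only [Pi.mul_apply, hxb i, hyb i]
    show (⋃ c ∈ F a * F a', P c) = (⋃ c ∈ F a, P c) * ⋃ c ∈ F a', P c
    rw [hFmul a a' b hb, hτ (a * a') (b * b') hbb', hτ a b hb, hτ a' b' hb',
      hPmul a b b' hb]
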